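/- Let a_1, …, a_M be points in ℝ² with M ≥ 4 and no three of them collinear, and fix an integer i ≥ 2. Then the set of tuples (p_1, …, p_i) ∈ (ℝ²)^i whose entries are pairwise distinct and for which there exists a set X^G ⊆ ℝ² with |X^G| = i, X^G ∩ {p_1, …, p_i} = ∅, and D_m(X^G) = D_m({p_1, …, p_i}) for every m = 1, …, M, has Lebesgue measure zero in (ℝ²)^i ≅ ℝ^{2i}. -/

import Mathlib

open MeasureTheory

noncomputable section

/-- The Euclidean plane ℝ². -/
abbrev Plane := EuclideanSpace ℝ (Fin 2)

/-- The range set of a BS located at `a` with respect to a target set `X`: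
the set of distances from `a` to the points of `X`. -/
def rangeSet (a : Plane) (X : Set Plane) : Set ℝ := (fun p => dist a p) '' X

open EuclideanGeometry Metric Set

/-- **Appendix A: Pr(E_i^{(r)}) = 0.** If `M ≥ 4` and no three BSs are collinear, then for
each `i ≥ 2`, the set of tuples of `i` pairwise distinct target positions that admit a ghost
configuration disjoint from them has Lebesgue measure zero in `(ℝ²)^i`. -/

lemma inner_dist_eq {c q q' : Plane} (h : dist c q = dist c q') :
    (inner ℝ c (q - q') : ℝ) = (‖q‖^2 - ‖q'‖^2)/2 := by
  have h2 : ‖c - q‖^2 = ‖c - q'‖^2 := by rw [← dist_eq_norm, ← dist_eq_norm, h]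
  rw [@norm_sub_sq_real, @norm_sub_sq_real] at h2
  rw [inner_sub_right]
  linarith

lemma inner_sub_zero {c c' q q' : Plane} (h : dist c q = dist c q')
    (h' : dist c' q = dist c' q') : (inner ℝ (c - c') (q - q') : ℝ) = 0 := by
  rw [inner_sub_left, inner_dist_eq h, inner_dist_eq h']; ring

lemma collinear_of_inner {v x1 x2 x3 : Plane} (hv : v ≠ 0)
    (h2 : (inner ℝ v (x2 - x1) : ℝ) = 0) (h3 : (inner ℝ v (x3 - x1) : ℝ) = 0) :
    Collinear ℝ ({x1, x2, x3} : Set Plane) := by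
  haveI : Fact (Module.finrank ℝ Plane = 1 + 1) := ⟨by simp [finrank_euclideanSpace_fin]⟩
  have hfr : Module.finrank ℝ ((ℝ ∙ v)ᗮ : Submodule ℝ Plane) = 1 := by
    rw [Submodule.finrank_orthogonal_span_singleton (n := 1) hv]
  obtain ⟨u, hu0, hu⟩ := (finrank_eq_one_iff' ).mp hfr
  have m2 : x2 - x1 ∈ (ℝ ∙ v)ᗮ := Submodule.mem_orthogonal_singleton_iff_inner_right.mpr h2
  have m3 : x3 - x1 ∈ (ℝ ∙ v)ᗮ := Submodule.mem_orthogonal_singleton_iff_inner_right.mpr h3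
  obtain ⟨c2, hc2⟩ := hu ⟨x2 - x1, m2⟩
  obtain ⟨c3, hc3⟩ := hu ⟨x3 - x1, m3⟩
  rw [collinear_iff_of_mem (Set.mem_insert x1 _)]
  refine ⟨(u : Plane), ?_⟩
  rintro p (rfl | rfl | rfl)
  · exact ⟨0, by simp⟩
  · exact ⟨c2, by have := congrArg Subtype.val hc2; simp at this; simp [this]⟩
  · exact ⟨c3, by have := congrArg Subtype.val hc3; simp at this; simp [this]⟩

lemma eq_of_three_dists {x1 x2 x3 q q' : Plane}
    (hnc : ¬ Collinear ℝ ({x1, x2, x3} : Set Plane))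
    (h1 : dist x1 q = dist x1 q') (h2 : dist x2 q = dist x2 q')
    (h3 : dist x3 q = dist x3 q') : q = q' := by
  by_contra hne
  have hv : q - q' ≠ 0 := sub_ne_zero.mpr hne
  exact hnc (collinear_of_inner hv
    (by rw [real_inner_comm]; exact inner_sub_zero h2 h1)
    (by rw [real_inner_comm]; exact inner_sub_zero h3 h1))

lemma two_circles_finite {c1 c2 : Plane} (hc : c1 ≠ c2) (r1 r2 : ℝ) :
    Set.Finite {q : Plane | dist c1 q = r1 ∧ dist c2 q = r2} := by
  set K := {q : Plane | dist c1 q = r1 ∧ dist c2 q = r2} with hK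
  have key : ∀ q1 ∈ K, ∀ q2 ∈ K, ∀ q3 ∈ K, q1 ≠ q2 → q1 ≠ q3 → q2 ≠ q3 → False := by
    intro q1 h1 q2 h2 q3 h3 h12 h13 h23
    have cosph : Cospherical ({q1, q2, q3} : Set Plane) := by
      refine ⟨c1, r1, ?_⟩
      rintro p (rfl | rfl | rfl) <;> rw [dist_comm]
      exacts [h1.1, h2.1, h3.1]
    have hai := cosph.affineIndependent_of_mem_of_ne (Set.mem_insert _ _)
      (by simp) (by simp) h12 h13 h23
    rw [affineIndependent_iff_not_collinear] at hai
    apply hai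
    have hcol : Collinear ℝ ({q1, q2, q3} : Set Plane) := by
      refine collinear_of_inner (sub_ne_zero.mpr hc) ?_ ?_
      · exact inner_sub_zero (h2.1.trans h1.1.symm) (h2.2.trans h1.2.symm)
      · exact inner_sub_zero (h3.1.trans h1.1.symm) (h3.2.trans h1.2.symm)
    rw [show Set.range ![q1, q2, q3] = ({q1, q2, q3} : Set Plane) from ?_]; exact hcol
    simp only [Matrix.range_cons, Matrix.range_empty, Set.union_empty]
    exact Set.Subset.antisymm (by intro x hx; rcases hx with rfl|rfl|rfl <;> simp)
      (by intro x hx; rcases hx with rfl|rfl|rfl <;> simp)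
  by_cases hex : ∃ x ∈ K, ∃ y ∈ K, x ≠ y
  · obtain ⟨x, hx, y, hy, hxy⟩ := hex
    refine Set.Finite.subset ((Set.finite_singleton y).insert x) ?_
    intro z hz
    by_contra hznot
    simp only [Set.mem_insert_iff, Set.mem_singleton_iff, not_or] at hznot
    exact key x hx y hy z hz hxy (Ne.symm hznot.1) (Ne.symm hznot.2)
  · push_neg at hex
    exact Set.Subsingleton.finite (fun x hx y hy => hex x hx y hy)

lemma measure_U_zero {i : ℕ} (c2 c3 c0 : Plane) (hc : c2 ≠ c3) (w u2 u3 : Fin i)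
    (hu2 : u2 ≠ w) (hu3 : u3 ≠ w) :
    volume {p : Fin i → Plane | ∃ q, dist c2 q = dist c2 (p u2) ∧
      dist c3 q = dist c3 (p u3) ∧ dist c0 (p w) = dist c0 q} = 0 := by
  classical
  set U := {p : Fin i → Plane | ∃ q, dist c2 q = dist c2 (p u2) ∧
      dist c3 q = dist c3 (p u3) ∧ dist c0 (p w) = dist c0 q} with hU
  -- U is measurable (σ-compact)
  set C := {pq : (Fin i → Plane) × Plane | dist c2 pq.2 = dist c2 (pq.1 u2) ∧
      dist c3 pq.2 = dist c3 (pq.1 u3) ∧ dist c0 (pq.1 w) = dist c0 pq.2} with hC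
  have hCclosed : IsClosed C := by
    have h1 : IsClosed {pq : (Fin i → Plane) × Plane | dist c2 pq.2 = dist c2 (pq.1 u2)} :=
      isClosed_eq (continuous_const.dist continuous_snd)
        (continuous_const.dist ((continuous_apply u2).comp continuous_fst))
    have h2 : IsClosed {pq : (Fin i → Plane) × Plane | dist c3 pq.2 = dist c3 (pq.1 u3)} :=
      isClosed_eq (continuous_const.dist continuous_snd)
        (continuous_const.dist ((continuous_apply u3).comp continuous_fst))
    have h3 : IsClosed {pq : (Fin i → Plane) × Plane | dist c0 (pq.1 w) = dist c0 pq.2} :=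
      isClosed_eq (continuous_const.dist ((continuous_apply w).comp continuous_fst))
        (continuous_const.dist continuous_snd)
    have : C = {pq : (Fin i → Plane) × Plane | dist c2 pq.2 = dist c2 (pq.1 u2)} ∩
        ({pq | dist c3 pq.2 = dist c3 (pq.1 u3)} ∩ {pq | dist c0 (pq.1 w) = dist c0 pq.2}) := by
      ext pq; simp [hC, and_assoc]
    rw [this]; exact h1.inter (h2.inter h3)
  have hUdecomp : U = ⋃ n : ℕ, Prod.fst '' (C ∩ (closedBall 0 n ×ˢ closedBall c2 n)) := by
    ext p
    constructor
    · rintro ⟨q, hq1, hq2, hq3⟩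
      obtain ⟨n, hn⟩ := exists_nat_ge (max ‖p‖ (dist q c2))
      refine mem_iUnion.mpr ⟨n, ⟨(p, q), ⟨⟨hq1, hq2, hq3⟩, ?_, ?_⟩, rfl⟩⟩
      · exact mem_closedBall_zero_iff.mpr ((le_max_left _ _).trans hn)
      · exact mem_closedBall.mpr ((le_max_right _ _).trans hn)
    · intro hp
      obtain ⟨n, ⟨pq, ⟨hpqC, _⟩, rfl⟩⟩ := mem_iUnion.mp hp
      exact ⟨pq.2, hpqC⟩
  have hUmeas : MeasurableSet U := by
    rw [hUdecomp]
    refine MeasurableSet.iUnion fun n => ?_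
    have hcomp : IsCompact (C ∩ (closedBall (0 : Fin i → Plane) n ×ˢ closedBall c2 n)) :=
      ((isCompact_closedBall _ _).prod (isCompact_closedBall _ _)).inter_left hCclosed
    exact (hcomp.image continuous_fst).measurableSet
  -- transfer to product space
  set e := MeasurableEquiv.piEquivPiSubtypeProd (fun _ : Fin i => Plane) (fun x => x ≠ w) with he
  have hmp : MeasurePreserving e volume volume :=
    volume_preserving_piEquivPiSubtypeProd (fun _ : Fin i => Plane) (fun x => x ≠ w)
  have hVU : volume (e.symm ⁻¹' U) = volume U :=
    (hmp.symm e).measure_preimage hUmeas.nullMeasurableSet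
  rw [← hVU]
  have hVmeas : MeasurableSet (e.symm ⁻¹' U) := e.symm.measurable hUmeas
  rw [Measure.volume_eq_prod]
  rw [Measure.measure_prod_null hVmeas]
  refine Filter.Eventually.of_forall fun g => ?_
  show volume (Prod.mk g ⁻¹' (⇑e.symm ⁻¹' U)) = (0 : (({x : Fin i // x ≠ w} → Plane) → ENNReal)) g
  simp only [Pi.zero_apply]
  -- the slice over g
  haveI : Unique {x : Fin i // ¬ x ≠ w} := by
    refine ⟨⟨⟨w, by simp⟩⟩, ?_⟩
    rintro ⟨x, hx⟩
    simp only [ne_eq, not_not] at hx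
    simp [hx]
  set ww : {x : Fin i // ¬ x ≠ w} := ⟨w, by simp⟩ with hww
  set K := {q : Plane | dist c2 q = dist c2 (g ⟨u2, hu2⟩) ∧
      dist c3 q = dist c3 (g ⟨u3, hu3⟩)} with hK
  have hKfin : K.Finite := two_circles_finite hc _ _
  set Z := ⋃ q ∈ K, sphere c0 (dist c0 q) with hZ
  have hZmeas : MeasurableSet Z :=
    MeasurableSet.biUnion hKfin.countable fun q _ => isClosed_sphere.measurableSet
  have hZnull : volume Z = 0 := by
    rw [measure_biUnion_null_iff hKfin.countable]
    exact fun q _ => Measure.addHaar_sphere volume c0 _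
  have hslice : Prod.mk g ⁻¹' (e.symm ⁻¹' U) ⊆ (fun h : {x : Fin i // ¬ x ≠ w} → Plane => h ww) ⁻¹' Z := by
    intro h hh
    obtain ⟨q, hq1, hq2, hq3⟩ := hh
    have hp2 : e.symm (g, h) u2 = g ⟨u2, hu2⟩ := by
      simp [he, MeasurableEquiv.piEquivPiSubtypeProd, Equiv.piEquivPiSubtypeProd, hu2]
    have hp3 : e.symm (g, h) u3 = g ⟨u3, hu3⟩ := by
      simp [he, MeasurableEquiv.piEquivPiSubtypeProd, Equiv.piEquivPiSubtypeProd, hu3]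
    have hpw : e.symm (g, h) w = h ww := by
      simp [he, MeasurableEquiv.piEquivPiSubtypeProd, Equiv.piEquivPiSubtypeProd, hww]
    rw [hp2] at hq1; rw [hp3] at hq2; rw [hpw] at hq3
    exact mem_iUnion₂.mpr ⟨q, ⟨hq1, hq2⟩, Metric.mem_sphere.mpr ((dist_comm _ _).trans hq3)⟩
  refine measure_mono_null hslice ?_
  exact Measure.pi_eval_preimage_null (μ := fun _ : {x : Fin i // ¬ x ≠ w} => (volume : Measure Plane)) (i := ww) hZnull

theorem ghost_event_measure_zero (M : ℕ) (hM : 4 ≤ M) (a : Fin M → Plane)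
    (hcol : ∀ i j k : Fin M, i ≠ j → i ≠ k → j ≠ k →
      ¬ Collinear ℝ ({a i, a j, a k} : Set Plane))
    (i : ℕ) (hi : 2 ≤ i) :
    volume {p : Fin i → Plane | Function.Injective p ∧
      ∃ XG : Set Plane, XG.Finite ∧ XG.ncard = i ∧
        XG ∩ Set.range p = ∅ ∧
        ∀ m : Fin M, rangeSet (a m) XG = rangeSet (a m) (Set.range p)} = 0 := by
  classical
  -- the base stations are pairwise distinct
  have ha : Function.Injective a := by
    intro m1 m2 hme
    by_contra hne
    obtain ⟨k, hk1, hk2⟩ : ∃ k : Fin M, k ≠ m1 ∧ k ≠ m2 := by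
      by_contra hk
      push_neg at hk
      have : (Finset.univ : Finset (Fin M)) ⊆ {m1, m2} := by
        intro x _
        by_cases hx : x = m1
        · simp [hx]
        · simp [hk x hx]
      have := Finset.card_le_card this
      simp only [Finset.card_univ, Fintype.card_fin] at this
      have h2 : ({m1, m2} : Finset (Fin M)).card ≤ 2 := Finset.card_insert_le _ _ |>.trans (by simp)
      omega
    apply hcol m1 m2 k hne (Ne.symm hk1) (Ne.symm hk2)
    have hset : ({a m1, a m2, a k} : Set Plane) = {a m2, a k} := by
      rw [hme, Set.insert_idem]
    rw [hset]
    exact collinear_pair ℝ _ _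
  set T : (Fin M → Fin i) → Set (Fin i → Plane) := fun j =>
    {p | ∃ q, q ∉ Set.range p ∧ ∀ m, dist (a m) q = dist (a m) (p (j m))} with hT
  have hsub : {p : Fin i → Plane | Function.Injective p ∧
      ∃ XG : Set Plane, XG.Finite ∧ XG.ncard = i ∧
        XG ∩ Set.range p = ∅ ∧
        ∀ m : Fin M, rangeSet (a m) XG = rangeSet (a m) (Set.range p)} ⊆ ⋃ j, T j := by
    rintro p ⟨-, XG, hfin, hcard, hdisj, hrange⟩
    have hne : XG.Nonempty := Set.nonempty_of_ncard_ne_zero (by omega)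
    obtain ⟨q, hq⟩ := hne
    have hqnot : q ∉ Set.range p := by
      intro hqr
      have : q ∈ XG ∩ Set.range p := ⟨hq, hqr⟩
      rw [hdisj] at this
      exact this
    have hfa : ∀ m, ∃ k, dist (a m) q = dist (a m) (p k) := by
      intro m
      have hmem : dist (a m) q ∈ rangeSet (a m) (Set.range p) := by
        rw [← hrange m]; exact ⟨q, hq, rfl⟩
      obtain ⟨x, ⟨k, rfl⟩, hx⟩ := hmem
      exact ⟨k, hx.symm⟩
    choose j hj using hfa
    exact mem_iUnion.mpr ⟨j, q, hqnot, hj⟩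
  refine measure_mono_null hsub (measure_iUnion_null fun j => ?_)
  by_cases h3 : ∃ m1 m2 m3 : Fin M, m1 ≠ m2 ∧ m1 ≠ m3 ∧ m2 ≠ m3 ∧ j m1 = j m2 ∧ j m1 = j m3
  · -- some value attained three times: T j is empty
    obtain ⟨m1, m2, m3, h12, h13, h23, e12, e13⟩ := h3
    have : T j = ∅ := by
      rw [Set.eq_empty_iff_forall_notMem]
      rintro p ⟨q, hqnot, hq⟩
      have hq2 : dist (a m2) q = dist (a m2) (p (j m1)) := by rw [e12]; exact hq m2
      have hq3 : dist (a m3) q = dist (a m3) (p (j m1)) := by rw [e13]; exact hq m3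
      have : q = p (j m1) := eq_of_three_dists (hcol m1 m2 m3 h12 h13 h23) (hq m1) hq2 hq3
      exact hqnot (this ▸ Set.mem_range_self _)
    rw [this]; exact measure_empty
  · -- every value attained at most twice
    have hM0 : 0 < M := by omega
    set m0 : Fin M := ⟨0, hM0⟩ with hm0
    set w : Fin i := j m0 with hw
    set s : Finset (Fin M) := Finset.univ.filter (fun m => j m ≠ w) with hs
    have hscard : 1 < s.card := by
      by_contra hle
      push_neg at hle
      set t : Finset (Fin M) := Finset.univ.filter (fun m => j m = w) with ht
      have hsum : t.card + s.card = M := by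
        rw [ht, hs]
        rw [Finset.card_filter_add_card_filter_not (p := fun m => j m = w)]
        · simp
      have htcard : 2 < t.card := by omega
      obtain ⟨m1, hm1, m2, hm2, m3, hm3, h12, h13, h23⟩ := Finset.two_lt_card.mp htcard
      rw [ht, Finset.mem_filter] at hm1 hm2 hm3
      exact h3 ⟨m1, m2, m3, h12, h13, h23, hm1.2.trans hm2.2.symm, hm1.2.trans hm3.2.symm⟩
    obtain ⟨m2, hm2, m3, hm3, hm23⟩ := Finset.one_lt_card.mp hscard
    rw [hs, Finset.mem_filter] at hm2 hm3
    have hu2 : j m2 ≠ w := hm2.2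
    have hu3 : j m3 ≠ w := hm3.2
    have ha23 : a m2 ≠ a m3 := fun h => hm23 (ha h)
    refine measure_mono_null ?_
      (measure_U_zero (a m2) (a m3) (a m0) ha23 w (j m2) (j m3) hu2 hu3)
    rintro p ⟨q, _, hq⟩
    exact ⟨q, hq m2, hq m3, (hq m0).symm⟩
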